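/- Bayes characterization of the conditional P(y_l | Z): let ν be the probability measure on {1,…,n} × ℝ^N given by ν = (1/n) ∑_{k=1}^n δ_k ⊗ (Lebesgue measure on ℝ^N with density w_k). Then the conditional expectation of the function (k, z) ↦ y_l(k) with respect to the σ-algebra generated by the projection (k, z) ↦ z equals the function (k, z) ↦ g_l(z), ν-almost everywhere. -/

import Mathlib

open MeasureTheory ProbabilityTheory Real

/-- Density of the normal distribution `N(μ, σ²)`. -/
noncomputable def phi (μ σ z : ℝ) : ℝ :=
  (σ * Real.sqrt (2 * Real.pi))⁻¹ * Real.exp (-(z - μ) ^ 2 / (2 * σ ^ 2))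

/-- Weight function `w_k(z) = ∏_{i=1}^N φ_{μ_k^i, σ_k^i}(z_i)`. -/
noncomputable def w {n N : ℕ} (μ σ : Fin n → Fin N → ℝ) (k : Fin n)
    (z : Fin N → ℝ) : ℝ :=
  ∏ i, phi (μ k i) (σ k i) (z i)

/-- The function `g_l(z) = (∑_k y_l(k)·w_k(z)) / (∑_k w_k(z))`. -/
noncomputable def g {n N m : ℕ} (μ σ : Fin n → Fin N → ℝ) (y : Fin m → Fin n → ℝ)
    (l : Fin m) (z : Fin N → ℝ) : ℝ :=
  (∑ k, y l k * w μ σ k z) / (∑ k, w μ σ k z)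
lemma phi_eq_gaussian {μ σ : ℝ} (hσ : 0 < σ) :
    phi μ σ = gaussianPDFReal μ (⟨σ ^ 2, sq_nonneg σ⟩ : NNReal) := by
  funext z
  unfold phi gaussianPDFReal
  show (σ * √(2 * π))⁻¹ * rexp (-(z - μ) ^ 2 / (2 * σ ^ 2)) =
    (√(2 * π * σ ^ 2))⁻¹ * rexp (-(z - μ) ^ 2 / (2 * σ ^ 2))
  rw [show 2 * π * σ ^ 2 = σ ^ 2 * (2 * π) by ring, Real.sqrt_mul (sq_nonneg σ),
    Real.sqrt_sq hσ.le]


lemma phi_pos {μ σ : ℝ} (hσ : 0 < σ) (z : ℝ) : 0 < phi μ σ z := by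
  unfold phi
  positivity

lemma integrable_phi {μ σ : ℝ} (hσ : 0 < σ) : Integrable (phi μ σ) := by
  rw [phi_eq_gaussian hσ]; exact integrable_gaussianPDFReal _ _

lemma integral_phi {μ σ : ℝ} (hσ : 0 < σ) : ∫ z, phi μ σ z = 1 := by
  rw [phi_eq_gaussian hσ]
  exact integral_gaussianPDFReal_eq_one μ (fun h => pow_ne_zero 2 hσ.ne' (congrArg NNReal.toReal h))


variable {n N m : ℕ} {μ σ : Fin n → Fin N → ℝ}

lemma w_pos (hσ : ∀ k i, 0 < σ k i) (k : Fin n) (z : Fin N → ℝ) : 0 < w μ σ k z :=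
  Finset.prod_pos fun i _ => phi_pos (hσ k i) _

lemma measurable_w (k : Fin n) : Measurable (w μ σ k) := by
  apply Finset.measurable_prod
  intro i _
  have : Measurable (phi (μ k i) (σ k i)) := by
    unfold phi; fun_prop
  exact this.comp (measurable_pi_apply i)

lemma integrable_w (hσ : ∀ k i, 0 < σ k i) (k : Fin n) : Integrable (w μ σ k) :=
  Integrable.fintype_prod (f := fun i => phi (μ k i) (σ k i)) fun i => integrable_phi (hσ k i)

lemma integral_w (hσ : ∀ k i, 0 < σ k i) (k : Fin n) : ∫ z, w μ σ k z = 1 := by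
  unfold w
  rw [volume_pi, integral_fintype_prod_eq_prod (fun i => phi (μ k i) (σ k i))]
  exact Finset.prod_eq_one fun i _ => integral_phi (hσ k i)

lemma sum_w_pos [NeZero n] (hσ : ∀ k i, 0 < σ k i) (z : Fin N → ℝ) :
    0 < ∑ k, w μ σ k z :=
  Finset.sum_pos (fun k _ => w_pos hσ k z) Finset.univ_nonempty

lemma measurable_g {y : Fin m → Fin n → ℝ} (l : Fin m) : Measurable (g μ σ y l) := by
  apply Measurable.div
  · exact Finset.measurable_sum _ fun k _ => (measurable_w k).const_mul _
  · exact Finset.measurable_sum _ fun k _ => measurable_w k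

lemma abs_g_le_one [NeZero n] (hσ : ∀ k i, 0 < σ k i) {y : Fin m → Fin n → ℝ}
    (hy : ∀ l k, y l k ∈ Set.Icc (0 : ℝ) 1) (l : Fin m) (z : Fin N → ℝ) :
    |g μ σ y l z| ≤ 1 := by
  have hd := sum_w_pos (μ := μ) hσ z
  have hnum0 : 0 ≤ ∑ k, y l k * w μ σ k z :=
    Finset.sum_nonneg fun k _ => mul_nonneg (hy l k).1 (w_pos hσ k z).le
  have hnum1 : ∑ k, y l k * w μ σ k z ≤ ∑ k, w μ σ k z :=
    Finset.sum_le_sum fun k _ => by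
      nlinarith [(hy l k).2, (w_pos (μ := μ) hσ k z).le, (hy l k).1]
  unfold g
  rw [abs_of_nonneg (div_nonneg hnum0 hd.le)]
  exact div_le_one_of_le₀ hnum1 hd.le

lemma isProbabilityMeasure_W (hσ : ∀ k i, 0 < σ k i) (k : Fin n) :
    IsProbabilityMeasure
      ((volume : Measure (Fin N → ℝ)).withDensity
        (fun z => ENNReal.ofReal (w μ σ k z))) := by
  constructor
  rw [withDensity_apply _ MeasurableSet.univ, Measure.restrict_univ,
    ← ofReal_integral_eq_lintegral_ofReal (integrable_w hσ k)
      (Filter.Eventually.of_forall fun z => (w_pos hσ k z).le),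
    integral_w hσ k, ENNReal.ofReal_one]

lemma restrict_finset_sum {α ι : Type*} [MeasurableSpace α] (s : Finset ι)
    (μs : ι → Measure α) (A : Set α) :
    (∑ i ∈ s, μs i).restrict A = ∑ i ∈ s, (μs i).restrict A := by
  ext u hu
  simp [Measure.restrict_apply hu, Measure.finset_sum_apply]

lemma key_setIntegral [NeZero n] (hσ : ∀ k i, 0 < σ k i)
    (F : Fin n × (Fin N → ℝ) → ℝ) (hFm : Measurable F) (hFb : ∀ p, |F p| ≤ 1)
    {t : Set (Fin N → ℝ)} (ht : MeasurableSet t) :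
    ∫ p in Prod.snd ⁻¹' t, F p ∂(((n : ENNReal))⁻¹ •
        ∑ k, (Measure.dirac k).prod
          ((volume : Measure (Fin N → ℝ)).withDensity
            (fun z => ENNReal.ofReal (w μ σ k z)))) =
      (n : ℝ)⁻¹ * ∑ k, ∫ z in t, F (k, z) * w μ σ k z := by
  set W : Fin n → Measure (Fin N → ℝ) := fun k =>
    (volume : Measure (Fin N → ℝ)).withDensity
      (fun z => ENNReal.ofReal (w μ σ k z)) with hW
  haveI : ∀ k, IsProbabilityMeasure (W k) := fun k => isProbabilityMeasure_W hσ k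
  have hst : MeasurableSet (Prod.snd ⁻¹' t : Set (Fin n × (Fin N → ℝ))) :=
    measurable_snd ht
  rw [Measure.restrict_smul, integral_smul_measure, restrict_finset_sum]
  have hterm : ∀ k : Fin n,
      ((Measure.dirac k).prod (W k)).restrict (Prod.snd ⁻¹' t) =
        Measure.map (Prod.mk k) ((W k).restrict t) := by
    intro k
    rw [Measure.dirac_prod, Measure.restrict_map measurable_prodMk_left hst,
      show (Prod.mk k ⁻¹' (Prod.snd ⁻¹' t)) = t from rfl]
  have hint : ∀ k ∈ Finset.univ, Integrable F
      (((Measure.dirac k).prod (W k)).restrict (Prod.snd ⁻¹' t)) := by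
    intro k _
    haveI : IsProbabilityMeasure ((Measure.dirac k).prod (W k)) := by infer_instance
    exact Integrable.mono' (integrable_const 1) hFm.aestronglyMeasurable
      (Filter.Eventually.of_forall hFb)
  rw [integral_finset_sum_measure hint]
  have hterm2 : ∀ k : Fin n,
      ∫ p, F p ∂(((Measure.dirac k).prod (W k)).restrict (Prod.snd ⁻¹' t)) =
        ∫ z in t, F (k, z) * w μ σ k z := by
    intro k
    rw [hterm k, integral_map measurable_prodMk_left.aemeasurable
      hFm.aestronglyMeasurable, hW]
    rw [restrict_withDensity ht]
    rw [show (fun z => ENNReal.ofReal (w μ σ k z)) =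
        (fun z => (((w μ σ k z).toNNReal : NNReal) : ENNReal)) from rfl,
      integral_withDensity_eq_integral_smul ((measurable_w k).real_toNNReal) _]
    apply integral_congr_ae
    filter_upwards with z
    rw [NNReal.smul_def, Real.coe_toNNReal _ (w_pos hσ k z).le, smul_eq_mul, mul_comm]
  rw [Finset.sum_congr rfl fun k _ => hterm2 k, smul_eq_mul]
  norm_num

theorem stmt12 (N n m : ℕ) (hn : 1 ≤ n)
    (μ σ : Fin n → Fin N → ℝ) (hσ : ∀ k i, 0 < σ k i)
    (y : Fin m → Fin n → ℝ) (hy : ∀ l k, y l k ∈ Set.Icc (0 : ℝ) 1)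
    (hysum : ∀ k, ∑ l, y l k = 1) (l : Fin m)
    (ν : Measure (Fin n × (Fin N → ℝ)))
    (hν : ν = ((n : ENNReal))⁻¹ •
        ∑ k, (Measure.dirac k).prod
          ((volume : Measure (Fin N → ℝ)).withDensity
            (fun z => ENNReal.ofReal (w μ σ k z)))) :
    MeasureTheory.condExp
        (MeasurableSpace.comap (Prod.snd : Fin n × (Fin N → ℝ) → (Fin N → ℝ))
          inferInstance)
        ν (fun p => y l p.1) =ᵐ[ν]
      fun p : Fin n × (Fin N → ℝ) => g μ σ y l p.2 := by
  haveI : NeZero n := ⟨by omega⟩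
  have hm : (MeasurableSpace.comap (Prod.snd : Fin n × (Fin N → ℝ) → (Fin N → ℝ))
      inferInstance) ≤ Prod.instMeasurableSpace :=
    measurable_snd.comap_le
  haveI hWp : ∀ k : Fin n, IsProbabilityMeasure
      ((volume : Measure (Fin N → ℝ)).withDensity
        (fun z => ENNReal.ofReal (w μ σ k z))) := fun k => isProbabilityMeasure_W hσ k
  haveI hνp : IsProbabilityMeasure ν := by
    constructor
    rw [hν, Measure.smul_apply, Measure.finset_sum_apply]
    rw [Finset.sum_congr rfl fun k _ => (measure_univ :
      ((Measure.dirac k).prod ((volume : Measure (Fin N → ℝ)).withDensity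
        (fun z => ENNReal.ofReal (w μ σ k z)))) Set.univ = 1)]
    rw [Finset.sum_const, Finset.card_univ, Fintype.card_fin, nsmul_eq_mul, mul_one,
      smul_eq_mul]
    exact ENNReal.inv_mul_cancel (Nat.cast_ne_zero.mpr (by omega)) (ENNReal.natCast_ne_top n)
  haveI : SigmaFinite (ν.trim hm) := by infer_instance
  have hfmeas : Measurable (fun p : Fin n × (Fin N → ℝ) => y l p.1) :=
    (measurable_of_countable (y l)).comp measurable_fst
  have hfbdd : ∀ p : Fin n × (Fin N → ℝ), |y l p.1| ≤ 1 := fun p => by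
    rw [abs_of_nonneg (hy l p.1).1]; exact (hy l p.1).2
  have hfint : Integrable (fun p : Fin n × (Fin N → ℝ) => y l p.1) ν :=
    Integrable.mono' (integrable_const 1) hfmeas.aestronglyMeasurable
      (Filter.Eventually.of_forall hfbdd)
  have hgmeas : Measurable (fun p : Fin n × (Fin N → ℝ) => g μ σ y l p.2) :=
    (measurable_g l).comp measurable_snd
  have hgbdd : ∀ p : Fin n × (Fin N → ℝ), |g μ σ y l p.2| ≤ 1 := fun p =>
    abs_g_le_one hσ hy l p.2
  have hgint : Integrable (fun p : Fin n × (Fin N → ℝ) => g μ σ y l p.2) ν :=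
    Integrable.mono' (integrable_const 1) hgmeas.aestronglyMeasurable
      (Filter.Eventually.of_forall hgbdd)
  refine (ae_eq_condExp_of_forall_setIntegral_eq hm hfint
    (fun s _ _ => hgint.integrableOn) ?_ ?_).symm
  · intro s hs _
    obtain ⟨t, ht, rfl⟩ := hs
    rw [hν, key_setIntegral hσ _ hgmeas hgbdd ht, key_setIntegral hσ _ hfmeas hfbdd ht]
    congr 1
    have hwint : ∀ k : Fin n, Integrable (w μ σ k) (volume.restrict t) :=
      fun k => (integrable_w hσ k).integrableOn
    have h1 : ∀ k ∈ Finset.univ, Integrable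
        (fun z => g μ σ y l z * w μ σ k z) (volume.restrict t) := fun k _ =>
      (hwint k).bdd_mul (measurable_g l).aestronglyMeasurable
        (Filter.Eventually.of_forall fun z => abs_g_le_one hσ hy l z)
    have h2 : ∀ k ∈ Finset.univ, Integrable
        (fun z => y l k * w μ σ k z) (volume.restrict t) := fun k _ =>
      (hwint k).const_mul _
    calc ∑ k, ∫ z in t, (fun p : Fin n × (Fin N → ℝ) => g μ σ y l p.2) (k, z) * w μ σ k z
        = ∫ z in t, ∑ k, g μ σ y l z * w μ σ k z := (integral_finset_sum _ h1).symm
      _ = ∫ z in t, ∑ k, y l k * w μ σ k z := by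
          apply integral_congr_ae
          filter_upwards with z
          rw [← Finset.mul_sum]
          unfold g
          exact div_mul_cancel₀ _ (sum_w_pos hσ z).ne'
      _ = ∑ k, ∫ z in t, (fun p : Fin n × (Fin N → ℝ) => y l p.1) (k, z) * w μ σ k z :=
          integral_finset_sum _ h2
  · exact StronglyMeasurable.aestronglyMeasurable
      (Measurable.stronglyMeasurable
        ((measurable_g l).comp (Measurable.of_comap_le le_rfl)))
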